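/- arXiv:2506.21301 — 3 statements merged into one kernel-verified Lean document; each statement's English description precedes it below -/
import Mathlib

section
/- For every positive integer m there exist m distinct primes p_1, …, p_m, each congruent to 1 modulo 4, such that the Legendre symbol (−p_j / p_i) equals −1 for every pair of indices i ≠ j. -/
open Finset in
/-- Key induction: we can find `k` distinct primes `≡ 1 (mod 4)` that are pairwise
quadratic non-residues of each other. -/
lemma stmt4_aux : ∀ k : ℕ, ∃ P : Fin k → ℕ, Function.Injective P ∧
    (∀ i, (P i).Prime ∧ P i % 4 = 1) ∧
    ∀ i j, i ≠ j → jacobiSym ((P j : ℤ)) (P i) = -1 := by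
  intro k
  induction k with
  | zero => exact ⟨Fin.elim0, fun i => i.elim0, fun i => i.elim0, fun i => i.elim0⟩
  | succ k ih =>
    obtain ⟨P, hPinj, hPprime, hPpair⟩ := ih
    -- For each i, choose a nonsquare mod P i
    have hFact : ∀ i, Fact (P i).Prime := fun i => ⟨(hPprime i).1⟩
    have hodd : ∀ i, Odd (P i) := by
      intro i
      have := (hPprime i).2
      rw [Nat.odd_iff]; omega
    have hne2 : ∀ i, P i ≠ 2 := by
      intro i h
      have := (hPprime i).2
      rw [h] at this; norm_num at this
    have hx : ∀ i, ∃ x : ZMod (P i), ¬ IsSquare x := by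
      intro i
      haveI := hFact i
      apply FiniteField.exists_nonsquare
      rw [ZMod.ringChar_zmod_n]
      exact hne2 i
    choose x hxns using hx
    have hxne : ∀ i, x i ≠ 0 := by
      intro i h
      exact hxns i (h ▸ ⟨0, by simp⟩)
    -- CRT setup
    set a : Option (Fin k) → ℕ := fun j => Option.elim j 4 P with ha
    have hapos : ∀ j, a j ≠ 0 := by
      rintro (_|i) h
      · simp [ha] at h
      · exact (hPprime i).1.pos.ne' h
    have hcop : Pairwise (Function.onFun Nat.Coprime a) := by
      rintro (_|i) (_|j) hij
      · simp at hij
      · simp only [ha, Function.onFun, Option.elim]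
        show Nat.Coprime (2 ^ 2) (P j)
        exact ((Nat.coprime_primes Nat.prime_two (hPprime j).1).mpr
          (fun h => hne2 j h.symm)).pow_left 2
      · simp only [ha, Function.onFun, Option.elim]
        show Nat.Coprime (P i) (2 ^ 2)
        exact ((Nat.coprime_primes (hPprime i).1 Nat.prime_two).mpr (hne2 i)).pow_right 2
      · simp only [ha, Function.onFun, Option.elim]
        exact (Nat.coprime_primes (hPprime i).1 (hPprime j).1).mpr
          (fun h => hij (congrArg some (hPinj h)))
    set N : ℕ := ∏ j, a j with hN
    have hNpos : 0 < N := Finset.prod_pos (fun j _ => Nat.pos_of_ne_zero (hapos j))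
    haveI : NeZero N := ⟨hNpos.ne'⟩
    let e : ZMod N ≃+* Π j, ZMod (a j) := ZMod.prodEquivPi a hcop
    -- the target residue
    let t : Π j, ZMod (a j) := fun j => Option.rec 1 (fun i => x i) j
    have htunit : IsUnit t := by
      rw [isUnit_iff_exists]
      refine ⟨fun j => Option.rec 1 (fun i => haveI := hFact i; (x i)⁻¹) j, ?_, ?_⟩ <;>
      · funext j
        rcases j with _|i
        · simp [t]
        · haveI := hFact i
          have h1 : x i * (x i)⁻¹ = 1 := mul_inv_cancel₀ (hxne i)
          have h2 : (x i)⁻¹ * x i = 1 := inv_mul_cancel₀ (hxne i)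
          simp [t]
          assumption
    have haunit : IsUnit (e.symm t) := e.symm.toRingHom.isUnit_map htunit
    obtain ⟨q, hqgt, hqprime, hqmod⟩ := Nat.forall_exists_prime_gt_and_eq_mod haunit N
    -- congruences of q
    have hq : ∀ j, ((q : ℕ) : ZMod (a j)) = t j := by
      intro j
      have h1 : e ((q : ZMod N)) = t := by rw [hqmod]; simp
      have h2 := congrFun h1 j
      have h3 : ((Pi.evalRingHom (fun j => ZMod (a j)) j).comp e.toRingHom) ((q : ℕ) : ZMod N)
          = ((q : ℕ) : ZMod (a j)) := map_natCast _ q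
      simpa [h3] using h2.symm ▸ (map_natCast
        ((Pi.evalRingHom (fun j => ZMod (a j)) j).comp e.toRingHom) q).symm
    have hq4 : q % 4 = 1 := by
      have := hq none
      have hv := congrArg ZMod.val this
      rwa [ZMod.val_natCast, show ZMod.val (t none) = 1 from rfl] at hv
    have hqP : ∀ i, jacobiSym (q : ℤ) (P i) = -1 := by
      intro i
      haveI := hFact i
      rw [← jacobiSym.legendreSym.to_jacobiSym]
      rw [legendreSym.eq_neg_one_iff]
      push_cast
      show ¬IsSquare ((q : ℕ) : ZMod (P i))
      rw [show ((q : ℕ) : ZMod (P i)) = x i from hq (some i)]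
      exact hxns i
    have hPq : ∀ i, jacobiSym ((P i : ℤ)) q = -1 := by
      intro i
      have := jacobiSym.quadratic_reciprocity_one_mod_four' (hodd i) hq4
      rw [this]
      exact hqP i
    -- q is bigger than all P i
    have hqne : ∀ i, P i ≠ q := by
      intro i h
      have hdvd : a (some i) ∣ N := Finset.dvd_prod_of_mem a (Finset.mem_univ _)
      have : P i ≤ N := Nat.le_of_dvd hNpos hdvd
      omega
    -- assemble
    refine ⟨Fin.snoc P q, ?_, ?_, ?_⟩
    · intro i j hij
      induction i using Fin.lastCases with
      | last =>
        induction j using Fin.lastCases with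
        | last => rfl
        | cast j' =>
          rw [Fin.snoc_last, Fin.snoc_castSucc] at hij
          exact absurd hij.symm (hqne j')
      | cast i' =>
        induction j using Fin.lastCases with
        | last =>
          rw [Fin.snoc_last, Fin.snoc_castSucc] at hij
          exact absurd hij (hqne i')
        | cast j' =>
          rw [Fin.snoc_castSucc, Fin.snoc_castSucc] at hij
          rw [hPinj hij]
    · intro i
      induction i using Fin.lastCases with
      | last => rw [Fin.snoc_last]; exact ⟨hqprime, hq4⟩
      | cast i' => rw [Fin.snoc_castSucc]; exact hPprime i'
    · intro i j hij
      induction i using Fin.lastCases with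
      | last =>
        induction j using Fin.lastCases with
        | last => exact absurd rfl hij
        | cast j' =>
          rw [Fin.snoc_last, Fin.snoc_castSucc]
          exact hPq j'
      | cast i' =>
        induction j using Fin.lastCases with
        | last =>
          rw [Fin.snoc_castSucc, Fin.snoc_last]
          exact hqP i'
        | cast j' =>
          rw [Fin.snoc_castSucc, Fin.snoc_castSucc]
          exact hPpair i' j' (fun h => hij (congrArg Fin.castSucc h))

/-- For every positive integer `m` there exist `m` distinct primes `p₁, …, p_m`, each
`≡ 1 (mod 4)`, such that the Legendre symbol `(−p_j / p_i)` equals `−1` whenever `i ≠ j`.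
(For a prime `p`, the Legendre symbol coincides with the Jacobi symbol `J(· | p)`.) -/
theorem stmt4 (m : ℕ) (hm : 0 < m) :
    ∃ P : Fin m → ℕ, Function.Injective P ∧
      (∀ i, (P i).Prime ∧ P i % 4 = 1) ∧
      ∀ i j, i ≠ j → jacobiSym (-(P j : ℤ)) (P i) = -1 := by
  obtain ⟨P, hinj, hprime, hpair⟩ := stmt4_aux m
  refine ⟨P, hinj, hprime, fun i j hij => ?_⟩
  have hodd : Odd (P i) := by
    have := (hprime i).2
    rw [Nat.odd_iff]; omega
  rw [jacobiSym.neg _ hodd, ZMod.χ₄_nat_one_mod_four (hprime i).2, one_mul]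
  exact hpair i j hij
end

section
/- Let d be a quadratic discriminant and let 𝔞 = aℤ + ((b+√d)/2)ℤ be a primitive ideal of the quadratic order O_d with gcd(a, d) = 1 (here a = N(𝔞)). Then for every positive integer t the ideal 𝔞^t is primitive. -/
set_option synthInstance.maxHeartbeats 1000000
set_option maxHeartbeats 1000000

/-- `ω_d = √d/2` if `d ≡ 0 (mod 4)`, and `ω_d = (1+√d)/2` if `d ≡ 1 (mod 4)`. -/
noncomputable def omegaD (d : ℕ) : ℝ :=
  if d % 4 = 0 then Real.sqrt d / 2 else (1 + Real.sqrt d) / 2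

/-- The quadratic order `O_d = ℤ[ω_d]`, as a subring of `ℝ`. -/
noncomputable def Od (d : ℕ) : Subalgebra ℤ ℝ := Algebra.adjoin ℤ {omegaD d}

/-- An ideal of `O_d` is *primitive* if it is not contained in `m·O_d` for any integer
`m ≥ 2`. -/
noncomputable def IsPrimitiveIdeal (d : ℕ) (𝔞 : Ideal (Od d)) : Prop :=
  ∀ k : ℕ, 2 ≤ k → ¬ (𝔞 ≤ Ideal.span {(k : Od d)})

lemma omegaD_eq (d : ℕ) :
    omegaD d = (((if d % 4 = 0 then (0:ℤ) else 1) : ℝ) + Real.sqrt d) / 2 := by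
  unfold omegaD; split <;> simp <;> ring

lemma mem_Od (d : ℕ) (hmod : d % 4 = 0 ∨ d % 4 = 1) (r : ℝ) (hr : r ∈ Od d) :
    ∃ m n : ℤ, r = m + n * omegaD d := by
  set ε : ℤ := if d % 4 = 0 then 0 else 1 with hε
  have hom : omegaD d = ((ε:ℝ) + Real.sqrt d) / 2 := by rw [omegaD_eq d]; norm_num [hε]
  obtain ⟨c, hc⟩ : ∃ c : ℤ, 4 * c = (d:ℤ) - ε ^ 2 := by
    rcases hmod with h | h <;> simp [hε, h] <;> exact ⟨(d:ℤ)/4, by omega⟩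
  have hsq : Real.sqrt d ^ 2 = (d:ℝ) := Real.sq_sqrt (by positivity)
  have hom2 : omegaD d ^ 2 = (c : ℝ) + (ε:ℝ) * omegaD d := by
    rw [hom]
    have h4 : (4:ℝ) * c = (d:ℝ) - (ε:ℝ)^2 := by exact_mod_cast congrArg (Int.cast : ℤ → ℝ) hc
    field_simp
    nlinarith [hsq]
  induction hr using Algebra.adjoin_induction with
  | mem x hx =>
      rcases hx with rfl
      exact ⟨0, 1, by simp⟩
  | algebraMap i => exact ⟨i, 0, by simp [Algebra.algebraMap_eq_smul_one]⟩
  | add x y hx hy ihx ihy =>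
      obtain ⟨m, n, rfl⟩ := ihx; obtain ⟨m', n', rfl⟩ := ihy
      exact ⟨m + m', n + n', by push_cast; ring⟩
  | mul x y hx hy ihx ihy =>
      obtain ⟨m, n, rfl⟩ := ihx; obtain ⟨m', n', rfl⟩ := ihy
      refine ⟨m * m' + n * n' * c, m * n' + m' * n + n * n' * ε, ?_⟩
      push_cast
      linear_combination (n:ℝ) * (n':ℝ) * hom2


theorem stmt13 (d : ℕ) (hd : ¬ IsSquare d) (hmod : d % 4 = 0 ∨ d % 4 = 1)
    (a b : ℤ) (ha : 0 < a) (𝔞 : Ideal (Od d))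
    (hform : (fun x : Od d => (x : ℝ)) '' (𝔞 : Set (Od d)) =
      {r : ℝ | ∃ u v : ℤ, r = a * u + (b + Real.sqrt d) / 2 * v})
    (hnorm : Nat.card (Od d ⧸ 𝔞) = a.toNat)
    (hprim : IsPrimitiveIdeal d 𝔞) (hgcd : Int.gcd a d = 1)
    (t : ℕ) (ht : 0 < t) :
    IsPrimitiveIdeal d (𝔞 ^ t) := by
  intro k hk hle
  have hirr : Irrational (Real.sqrt d) := irrational_sqrt_natCast_iff.mpr hd
  set ε : ℤ := if d % 4 = 0 then 0 else 1 with hε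
  have hom : omegaD d = ((ε:ℝ) + Real.sqrt d) / 2 := by rw [omegaD_eq d]; norm_num [hε]
  have hsq : Real.sqrt d ^ 2 = (d:ℝ) := Real.sq_sqrt (by positivity)
  obtain ⟨c, hc⟩ : ∃ c : ℤ, 4 * c = (d:ℤ) - ε ^ 2 := by
    rcases hmod with h | h <;> simp [hε, h] <;> exact ⟨(d:ℤ)/4, by omega⟩
  -- key irrationality splitting
  have key : ∀ A B : ℤ, (A:ℝ) + B * Real.sqrt d = 0 → A = 0 ∧ B = 0 := by
    intro A B h
    have hB : B = 0 := by
      by_contra hB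
      apply hirr
      refine ⟨(-A : ℚ)/(B:ℚ), ?_⟩
      have hBR : (B:ℝ) ≠ 0 := Int.cast_ne_zero.mpr hB
      push_cast
      field_simp
      linarith
    refine ⟨?_, hB⟩
    rw [hB] at h
    simp at h
    exact_mod_cast h
  -- the generator x
  have hx1 : ((b:ℝ) + Real.sqrt d)/2 ∈ {r : ℝ | ∃ u v : ℤ, r = a * u + (b + Real.sqrt d) / 2 * v} :=
    ⟨0, 1, by push_cast; ring⟩
  rw [← hform] at hx1
  obtain ⟨x, hxa, hxval⟩ := hx1
  simp only at hxval
  -- a ∈ 𝔞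
  have ha1 : (a:ℝ) ∈ {r : ℝ | ∃ u v : ℤ, r = a * u + (b + Real.sqrt d) / 2 * v} :=
    ⟨1, 0, by push_cast; ring⟩
  rw [← hform] at ha1
  obtain ⟨za, hza, hzaval⟩ := ha1
  simp only at hzaval
  have haA : ((a:ℤ) : Od d) ∈ 𝔞 := by
    have : za = ((a:ℤ) : Od d) := by
      apply Subtype.ext
      rw [hzaval]
      push_cast
      ring
    rwa [this] at hza
  -- prime p dividing k
  obtain ⟨p, hp, hpk⟩ := Nat.exists_prime_and_dvd (show k ≠ 1 by omega)
  have hp2 : 2 ≤ p := hp.two_le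
  have hlep : 𝔞 ^ t ≤ Ideal.span {((p:ℕ) : Od d)} := by
    refine le_trans hle (Ideal.span_singleton_le_span_singleton.mpr ?_)
    exact_mod_cast Nat.cast_dvd_cast (α := Od d) hpk
  -- coefficient extraction
  have coeff : ∀ g : ℤ, ((g : Od d) * x) ∈ Ideal.span {((p:ℕ) : Od d)} → (p:ℤ) ∣ g := by
    intro g h
    rw [Ideal.mem_span_singleton] at h
    obtain ⟨w, hw⟩ := h
    obtain ⟨m, n, hmn⟩ := mem_Od d hmod (w:ℝ) w.2
    have hre : (g:ℝ) * (((b:ℝ) + Real.sqrt d)/2) = (p:ℝ) * ((m:ℝ) + n * omegaD d) := by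
      have h2 := congrArg (Subtype.val) hw
      push_cast at h2
      rw [hxval] at h2
      rw [← hmn]
      exact_mod_cast h2
    have hkey := key (g*b - (p:ℤ)*(2*m + n*ε)) (g - (p:ℤ)*n) (by
      rw [hom] at hre
      push_cast
      field_simp at hre
      linarith)
    exact ⟨n, by linarith [hkey.2]⟩
  -- structure of x : b = 2 m0 + ε
  obtain ⟨m0, n0, hm0⟩ := mem_Od d hmod (x:ℝ) x.2
  have hb : b = 2*m0 + ε := by
    rw [hxval, hom] at hm0
    have hkey := key (b - 2*m0 - n0*ε) (1 - n0) (by push_cast; field_simp at hm0; linarith)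
    have h1 : n0 = 1 := by linarith [hkey.2]
    have := hkey.1
    rw [h1] at this
    linarith
  set N : ℤ := m0^2 + m0*ε - c with hNdef
  have h4N : 4*N = b^2 - (d:ℤ) := by rw [hb]; linear_combination -hc
  -- N ∈ 𝔞, so a ∣ N
  have hNval : (((N:ℤ) : Od d) : ℝ) = (N:ℝ) := by push_cast; ring
  have hmemN : ((N:ℤ) : Od d) ∈ 𝔞 := by
    have hEq : ((N:ℤ) : Od d) = x * (((b:ℤ) : Od d) - x) := by
      apply Subtype.ext
      push_cast
      rw [hxval]
      have h4 : (4:ℝ)*N = (b:ℝ)^2 - (d:ℝ) := by exact_mod_cast congrArg (Int.cast : ℤ → ℝ) h4N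
      nlinarith [hsq]
    rw [hEq]
    exact Ideal.mul_mem_right _ _ hxa
  have hNau : ∃ u : ℤ, N = a * u := by
    have hNimg : (N:ℝ) ∈ {r : ℝ | ∃ u v : ℤ, r = a * u + (b + Real.sqrt d) / 2 * v} := by
      rw [← hform]; exact ⟨((N:ℤ) : Od d), hmemN, hNval⟩
    obtain ⟨u, v, huv⟩ := hNimg
    have hkey := key (2*a*u + b*v - 2*N) v (by push_cast; field_simp at huv; linarith)
    have hv : v = 0 := hkey.2
    rw [hv] at hkey
    exact ⟨u, by linarith [hkey.1]⟩
  -- x^2 = b x - N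
  have hx2 : x^2 = ((b:ℤ) : Od d) * x - ((N:ℤ) : Od d) := by
    apply Subtype.ext
    push_cast
    rw [hxval]
    have h4 : (4:ℝ)*N = (b:ℝ)^2 - (d:ℝ) := by exact_mod_cast congrArg (Int.cast : ℤ → ℝ) h4N
    nlinarith [hsq]
  have hind : ∀ j : ℕ, ∃ y : Od d, x^(j+1) = ((b^j : ℤ) : Od d) * x + ((N:ℤ) : Od d) * y := by
    intro j
    induction j with
    | zero => exact ⟨0, by push_cast; ring⟩
    | succ j ih =>
        obtain ⟨y, hy⟩ := ih
        refine ⟨x*y - ((b^j : ℤ) : Od d), ?_⟩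
        push_cast at hy ⊢
        linear_combination x * hy + ((b:Od d))^j * hx2
  -- main argument
  obtain ⟨s, rfl⟩ : ∃ s, t = s + 1 := ⟨t-1, by omega⟩
  have hmem1 : ((a^s : ℤ) : Od d) * x ∈ 𝔞^(s+1) := by
    rw [pow_succ]
    have : ((a^s : ℤ) : Od d) = ((a:ℤ) : Od d)^s := by push_cast; ring
    rw [this]
    exact Ideal.mul_mem_mul (Ideal.pow_mem_pow haA s) hxa
  have hdas : (p:ℤ) ∣ a^s := coeff (a^s) (hlep hmem1)
  rcases Nat.eq_zero_or_pos s with hs | hs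
  · rw [hs] at hdas
    simp at hdas
    have := Int.le_of_dvd one_pos hdas
    omega
  -- s ≥ 1 : p ∣ a
  have hpZ : Prime ((p:ℕ) : ℤ) := Nat.prime_iff_prime_int.mp hp
  have hpa : (p:ℤ) ∣ a := hpZ.dvd_of_dvd_pow hdas
  obtain ⟨u, hu⟩ := hNau
  have hpN : (p:ℤ) ∣ N := hu ▸ Dvd.dvd.mul_right hpa u
  -- b^s x ∈ span p
  have hxt : x^(s+1) ∈ Ideal.span {((p:ℕ) : Od d)} := hlep (Ideal.pow_mem_pow hxa (s+1))
  obtain ⟨y, hy⟩ := hind s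
  have hNsp : ((N:ℤ) : Od d) * y ∈ Ideal.span {((p:ℕ) : Od d)} := by
    rw [Ideal.mem_span_singleton]
    obtain ⟨q, hq⟩ := hpN
    exact ⟨(q : Od d) * y, by rw [hq]; push_cast; ring⟩
  have hbs : ((b^s : ℤ) : Od d) * x ∈ Ideal.span {((p:ℕ) : Od d)} := by
    have : ((b^s : ℤ) : Od d) * x = x^(s+1) - ((N:ℤ) : Od d) * y := by rw [hy]; ring
    rw [this]
    exact Ideal.sub_mem _ hxt hNsp
  have hpb : (p:ℤ) ∣ b := hpZ.dvd_of_dvd_pow (coeff (b^s) hbs)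
  -- p ∣ d
  have hpd : (p:ℤ) ∣ (d:ℤ) := by
    have : (d:ℤ) = b^2 - 4*N := by linarith [h4N]
    rw [this]
    exact dvd_sub (Dvd.dvd.mul_right (hpb.mul_left b) 1 |>.trans (by ring_nf; exact dvd_refl _)) (Dvd.dvd.mul_left hpN 4)
  have : (p:ℤ) ∣ (Int.gcd a (d:ℤ) : ℤ) := Int.dvd_coe_gcd hpa hpd
  rw [hgcd] at this
  have := Int.le_of_dvd one_pos this
  omega
end

section
/- Let m ≥ 1 and let n_1, …, n_m be integers ≥ 2. For y > 0 put G(y) = {(x_1, …, x_m) ∈ ℝ^m : x_i ≥ 0 for all i, Σ_{i=1}^m x_i log n_i ≤ y}. Then there exist C > 0 and D₀ > 0 such that for all real d ≥ D₀, writing y = log(√d/2), | Σ_{(e_1,…,e_m) ∈ ℤ^m ∩ G(y)} ( y − Σ_{i=1}^m e_i log n_i ) − ∫_{G(y)} ( y − Σ_{i=1}^m x_i log n_i ) dx_1 … dx_m | ≤ C·(log d)^m. -/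
open MeasureTheory Set

namespace Stmt15Aux

section
variable {m : ℕ} {w : Fin m → ℝ}

noncomputable def ff (w : Fin m → ℝ) (t : ℝ) (x : Fin m → ℝ) : ℝ := max (t - ∑ i, x i * w i) 0

def cube (e : Fin m → ℕ) : Set (Fin m → ℝ) := univ.pi fun i => Ico (e i : ℝ) (e i + 1)

def orth (m : ℕ) : Set (Fin m → ℝ) := univ.pi fun _ => Ici 0

lemma orth_meas : MeasurableSet (orth m) := MeasurableSet.univ_pi fun _ => measurableSet_Ici

lemma cube_meas (e : Fin m → ℕ) : MeasurableSet (cube e) := MeasurableSet.univ_pi fun _ => measurableSet_Ico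

lemma mem_orth {x : Fin m → ℝ} : x ∈ orth m ↔ ∀ i, 0 ≤ x i := by
  simp [orth, Pi.le_def]

lemma volume_cube (e : Fin m → ℕ) : volume (cube e) = 1 := by
  rw [cube, volume_pi_pi]
  simp

lemma iUnion_cube : (⋃ e : Fin m → ℕ, cube e) = orth m := by
  ext x
  simp only [mem_iUnion, cube, mem_pi, mem_univ, forall_true_left, mem_Ico, mem_orth]
  constructor
  · rintro ⟨e, he⟩ i; exact le_trans (Nat.cast_nonneg _) (he i).1
  · intro hx
    exact ⟨fun i => ⌊x i⌋₊, fun i => ⟨Nat.floor_le (hx i), Nat.lt_floor_add_one (x i)⟩⟩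

lemma cube_disj : Pairwise (Function.onFun Disjoint (cube (m := m))) := by
  intro e e' hne
  rw [Function.onFun, Set.disjoint_left]
  intro x hx hx'
  apply hne
  funext i
  have h1 := hx i trivial
  have h2 := hx' i trivial
  clear hx hx'
  simp only [mem_Ico] at h1 h2
  have : (e i : ℝ) = e' i := by
    rcases lt_trichotomy (e i) (e' i) with h | h | h
    · exfalso
      have : (e i : ℝ) + 1 ≤ e' i := by exact_mod_cast Nat.succ_le_of_lt h
      linarith [h1.2, h2.1]
    · rw [h]
    · exfalso
      have : (e' i : ℝ) + 1 ≤ e i := by exact_mod_cast Nat.succ_le_of_lt h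
      linarith [h1.1, h2.2]
  exact_mod_cast this

lemma ff_nonneg (t : ℝ) (x : Fin m → ℝ) : 0 ≤ ff w t x := le_max_right _ _

lemma ff_cont (t : ℝ) : Continuous (ff w t) := by
  apply Continuous.max _ continuous_const
  exact continuous_const.sub (continuous_finset_sum _ fun i _ => (continuous_apply i).mul continuous_const)

lemma ff_anti (hw : ∀ i, 0 ≤ w i) {t : ℝ} {x x' : Fin m → ℝ} (h : ∀ i, x i ≤ x' i) :
    ff w t x' ≤ ff w t x := by
  apply max_le_max _ le_rfl
  have : ∑ i, x i * w i ≤ ∑ i, x' i * w i :=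
    Finset.sum_le_sum fun i _ => mul_le_mul_of_nonneg_right (h i) (hw i)
  linarith

-- if x in orth and some x i * w i > t then ff = 0
lemma ff_eq_zero (hw : ∀ i, 0 ≤ w i) {t : ℝ} {x : Fin m → ℝ} (hx : ∀ i, 0 ≤ x i)
    (i : Fin m) (hi : t ≤ x i * w i) : ff w t x = 0 := by
  have h1 : x i * w i ≤ ∑ j, x j * w j :=
    Finset.single_le_sum (fun j _ => mul_nonneg (hx j) (hw j)) (Finset.mem_univ i)
  simp only [ff, max_eq_right_iff]
  linarith

lemma ff_integrableOn (hw : ∀ i, Real.log 2 ≤ w i) (t : ℝ) :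
    IntegrableOn (ff w t) (orth m) := by
  have hl2 : (0:ℝ) < Real.log 2 := Real.log_pos one_lt_two
  have hw0 : ∀ i, 0 ≤ w i := fun i => le_trans hl2.le (hw i)
  set R : ℝ := |t| / Real.log 2 + 1 with hR
  have hR0 : 0 ≤ R := by positivity
  set B : Set (Fin m → ℝ) := univ.pi fun _ => Icc 0 R with hB
  have hBc : IsCompact B := isCompact_univ_pi fun _ => isCompact_Icc
  have horthc : IsClosed (orth m) := isClosed_set_pi fun _ _ => isClosed_Ici
  have hcomp : IsCompact (orth m ∩ B) := hBc.inter_left horthc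
  have hIB : IntegrableOn (ff w t) (orth m ∩ B) :=
    (ff_cont t).continuousOn.integrableOn_compact hcomp
  have hmeasB : MeasurableSet (orth m ∩ B) :=
    orth_meas.inter (MeasurableSet.univ_pi fun _ => measurableSet_Icc)
  have heq : (orth m).indicator (ff w t) = (orth m ∩ B).indicator (ff w t) := by
    funext x
    by_cases hxo : x ∈ orth m
    · by_cases hxB : x ∈ B
      · rw [indicator_of_mem hxo, indicator_of_mem (mem_inter hxo hxB)]
      · rw [indicator_of_mem hxo, indicator_of_notMem (fun h => hxB h.2)]
        rw [mem_orth] at hxo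
        simp only [hB, mem_pi, mem_univ, forall_true_left, mem_Icc, not_forall] at hxB
        obtain ⟨i, hi⟩ := hxB
        have hxi : R < x i := by
          rcases not_and_or.mp hi with h | h
          · exact absurd (hxo i) h
          · exact lt_of_not_ge h
        apply ff_eq_zero hw0 hxo i
        have h1 : R * Real.log 2 ≤ x i * w i := by
          apply mul_le_mul hxi.le (hw i) hl2.le (le_trans hR0 hxi.le)
        have h2 : R * Real.log 2 = |t| + Real.log 2 := by
          rw [hR, add_mul, div_mul_cancel₀ _ hl2.ne', one_mul]
        nlinarith [abs_nonneg t, le_abs_self t]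
    · rw [indicator_of_notMem hxo, indicator_of_notMem (fun h => hxo h.1)]
  rw [← integrable_indicator_iff orth_meas, heq,
    integrable_indicator_iff hmeasB]
  exact hIB

lemma ff_int_cube (hw : ∀ i, Real.log 2 ≤ w i) (t : ℝ) (e : Fin m → ℕ) :
    IntegrableOn (ff w t) (cube e) := by
  refine ((ff_cont t).continuousOn.integrableOn_compact
    (isCompact_univ_pi fun i => isCompact_Icc (a := (e i : ℝ)) (b := (e i) + 1))).mono_set ?_
  exact pi_mono fun i _ => Ico_subset_Icc_self

lemma hasSum_cubes (hw : ∀ i, Real.log 2 ≤ w i) (t : ℝ) :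
    HasSum (fun e : Fin m → ℕ => ∫ x in cube e, ff w t x) (∫ x in orth m, ff w t x) := by
  have := hasSum_integral_iUnion (μ := volume) (f := ff w t) cube_meas cube_disj
    (by rw [iUnion_cube]; exact ff_integrableOn hw t)
  rwa [iUnion_cube] at this

lemma cube_lower (hw : ∀ i, Real.log 2 ≤ w i) (t : ℝ) (e : Fin m → ℕ) :
    ∫ x in cube e, ff w t x ≤ ff w t (fun i => (e i : ℝ)) := by
  have hw0 : ∀ i, 0 ≤ w i := fun i => le_trans (Real.log_pos one_lt_two).le (hw i)
  have h : ∫ x in cube e, ff w t x ≤ ∫ _x in cube e, ff w t (fun i => (e i : ℝ)) := by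
    refine setIntegral_mono_on (ff_int_cube hw t e) (integrableOn_const ?_) (cube_meas e) ?_
    · rw [volume_cube]; exact ENNReal.one_ne_top
    · intro x hx
      refine ff_anti hw0 fun i => ?_
      exact (hx i trivial).1
  rwa [setIntegral_const, measureReal_def, volume_cube, ENNReal.toReal_one, one_smul] at h

lemma cube_upper (hw : ∀ i, Real.log 2 ≤ w i) (t : ℝ) (e : Fin m → ℕ) :
    ff w t (fun i => (e i : ℝ)) ≤ ∫ x in cube e, ff w (t + ∑ i, w i) x := by
  have hw0 : ∀ i, 0 ≤ w i := fun i => le_trans (Real.log_pos one_lt_two).le (hw i)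
  have h : ∫ _x in cube e, ff w t (fun i => (e i : ℝ)) ≤ ∫ x in cube e, ff w (t + ∑ i, w i) x := by
    refine setIntegral_mono_on (integrableOn_const ?_) (ff_int_cube hw _ e) (cube_meas e) ?_
    · rw [volume_cube]; exact ENNReal.one_ne_top
    · intro x hx
      have hsum : ∑ i, x i * w i ≤ (∑ i, (e i : ℝ) * w i) + ∑ i, w i := by
        rw [← Finset.sum_add_distrib]
        refine Finset.sum_le_sum fun i _ => ?_
        have := (hx i trivial).2
        nlinarith [hw0 i]
      exact max_le_max (by linarith) le_rfl
  rwa [setIntegral_const, measureReal_def, volume_cube, ENNReal.toReal_one, one_smul] at h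

lemma ff_summable (hw : ∀ i, Real.log 2 ≤ w i) (t : ℝ) :
    Summable (fun e : Fin m → ℕ => ff w t (fun i => (e i : ℝ))) := by
  have hl2 : (0:ℝ) < Real.log 2 := Real.log_pos one_lt_two
  have hw0 : ∀ i, 0 ≤ w i := fun i => le_trans hl2.le (hw i)
  set N : ℕ := ⌈t / Real.log 2⌉₊ with hN
  apply summable_of_ne_finset_zero (s := Fintype.piFinset fun _ => Finset.range (N + 1))
  intro e he
  simp only [Fintype.mem_piFinset, Finset.mem_range, not_forall, not_lt] at he
  obtain ⟨i, hi⟩ := he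
  apply ff_eq_zero hw0 (fun i => Nat.cast_nonneg _) i
  have h1 : t / Real.log 2 ≤ (N : ℝ) := Nat.le_ceil _
  have h2 : (N : ℝ) + 1 ≤ (e i : ℝ) := by exact_mod_cast hi
  have h3 : t ≤ (N : ℝ) * Real.log 2 := by
    rw [div_le_iff₀ hl2] at h1; linarith
  have h4 : (e i : ℝ) * Real.log 2 ≤ (e i : ℝ) * w i :=
    mul_le_mul_of_nonneg_left (hw i) (Nat.cast_nonneg _)
  nlinarith

lemma diff_bound (hw : ∀ i, Real.log 2 ≤ w i) {t : ℝ} (ht : 0 ≤ t) :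
    (∫ x in orth m, ff w (t + ∑ i, w i) x) - (∫ x in orth m, ff w t x) ≤
      (∑ i, w i) * ((t + ∑ i, w i) / Real.log 2) ^ m := by
  have hl2 : (0:ℝ) < Real.log 2 := Real.log_pos one_lt_two
  have hw0 : ∀ i, 0 ≤ w i := fun i => le_trans hl2.le (hw i)
  set L : ℝ := ∑ i, w i with hLdef
  have hL0 : 0 ≤ L := Finset.sum_nonneg fun i _ => hw0 i
  set R : ℝ := (t + L) / Real.log 2 with hRdef
  have hR0 : 0 ≤ R := by positivity
  set B : Set (Fin m → ℝ) := univ.pi fun _ => Icc 0 R with hBdef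
  have hmeasB : MeasurableSet B := MeasurableSet.univ_pi fun _ => measurableSet_Icc
  have hvolB : volume B = ENNReal.ofReal R ^ m := by
    rw [hBdef, volume_pi_pi]
    simp [Real.volume_Icc]
  set g : (Fin m → ℝ) → ℝ := fun x => ff w (t + L) x - ff w t x with hgdef
  have hsub : (∫ x in orth m, ff w (t + L) x) - (∫ x in orth m, ff w t x)
      = ∫ x in orth m, g x :=
    (integral_sub (ff_integrableOn hw (t + L)) (ff_integrableOn hw t)).symm
  have hind : (orth m).indicator g = (orth m ∩ B).indicator g := by
    funext x
    by_cases hxo : x ∈ orth m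
    · by_cases hxB : x ∈ B
      · rw [indicator_of_mem hxo, indicator_of_mem (mem_inter hxo hxB)]
      · rw [indicator_of_mem hxo, indicator_of_notMem (fun h => hxB h.2)]
        rw [mem_orth] at hxo
        simp only [hBdef, mem_pi, mem_univ, forall_true_left, mem_Icc, not_forall] at hxB
        obtain ⟨i, hi⟩ := hxB
        have hxi : R < x i := by
          rcases not_and_or.mp hi with h | h
          · exact absurd (hxo i) h
          · exact lt_of_not_ge h
        have hxiwi : t + L ≤ x i * w i := by
          have h1 : R * Real.log 2 ≤ x i * w i :=
            mul_le_mul hxi.le (hw i) hl2.le (le_trans hR0 hxi.le)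
          have h2 : R * Real.log 2 = t + L := by rw [hRdef, div_mul_cancel₀ _ hl2.ne']
          linarith
        rw [hgdef]
        simp only
        rw [ff_eq_zero hw0 hxo i hxiwi, ff_eq_zero hw0 hxo i (by linarith), sub_zero]
    · rw [indicator_of_notMem hxo, indicator_of_notMem (fun h => hxo h.1)]
  have hIg : IntegrableOn g (orth m ∩ B) := by
    have h : IntegrableOn (fun x => ff w (t + L) x - ff w t x) (orth m) :=
      (ff_integrableOn hw (t + L)).sub (ff_integrableOn hw t)
    exact h.mono_set inter_subset_left
  have hstep : ∫ x in orth m, g x = ∫ x in orth m ∩ B, g x := by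
    rw [← integral_indicator orth_meas, hind, integral_indicator (orth_meas.inter hmeasB)]
  have hvol_lt : volume (orth m ∩ B) < ⊤ := by
    refine lt_of_le_of_lt (measure_mono inter_subset_right) ?_
    rw [hvolB]
    exact ENNReal.pow_lt_top ENNReal.ofReal_lt_top
  have hmono : ∫ x in orth m ∩ B, g x ≤ ∫ _x in orth m ∩ B, L := by
    refine setIntegral_mono_on hIg (integrableOn_const hvol_lt.ne)
      (orth_meas.inter hmeasB) ?_
    intro x _
    rw [hgdef]
    simp only [ff]
    have h1 : t + L - ∑ i, x i * w i ≤ max (t - ∑ i, x i * w i) 0 + L := by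
      have := le_max_left (t - ∑ i, x i * w i) 0
      linarith
    have h2 : (0:ℝ) ≤ max (t - ∑ i, x i * w i) 0 + L := by
      have := le_max_right (t - ∑ i, x i * w i) 0
      linarith
    have := max_le h1 h2
    linarith
  have hconst : ∫ _x in orth m ∩ B, L = (volume (orth m ∩ B)).toReal * L := by
    rw [setIntegral_const, smul_eq_mul, measureReal_def]
  have hvle : (volume (orth m ∩ B)).toReal ≤ R ^ m := by
    have h1 : (volume (orth m ∩ B)).toReal ≤ (volume B).toReal := by
      apply ENNReal.toReal_mono
      · rw [hvolB]; exact (ENNReal.pow_lt_top ENNReal.ofReal_lt_top).ne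
      · exact measure_mono inter_subset_right
    rw [hvolB, ← ENNReal.ofReal_pow hR0, ENNReal.toReal_ofReal (by positivity)] at h1
    exact h1
  calc (∫ x in orth m, ff w (t + L) x) - (∫ x in orth m, ff w t x)
      = ∫ x in orth m ∩ B, g x := by rw [hsub, hstep]
    _ ≤ (volume (orth m ∩ B)).toReal * L := by rw [← hconst]; exact hmono
    _ ≤ L * R ^ m := by
        rw [mul_comm]
        exact mul_le_mul_of_nonneg_left hvle hL0

lemma sum_sub_integral_bound (hw : ∀ i, Real.log 2 ≤ w i) {t : ℝ} (ht : 0 ≤ t) :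
    |(∑' e : Fin m → ℕ, ff w t (fun i => (e i : ℝ))) - ∫ x in orth m, ff w t x| ≤
      (∑ i, w i) * ((t + ∑ i, w i) / Real.log 2) ^ m := by
  have h1 : ∫ x in orth m, ff w t x ≤ ∑' e : Fin m → ℕ, ff w t (fun i => (e i : ℝ)) := by
    rw [← (hasSum_cubes hw t).tsum_eq]
    exact Summable.tsum_le_tsum (cube_lower hw t) (hasSum_cubes hw t).summable (ff_summable hw t)
  have h2 : (∑' e : Fin m → ℕ, ff w t (fun i => (e i : ℝ))) ≤
      ∫ x in orth m, ff w (t + ∑ i, w i) x := by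
    rw [← (hasSum_cubes hw (t + ∑ i, w i)).tsum_eq]
    exact Summable.tsum_le_tsum (cube_upper hw t) (ff_summable hw t)
      (hasSum_cubes hw (t + ∑ i, w i)).summable
  have h3 := diff_bound hw ht (w := w)
  rw [abs_of_nonneg (by linarith)]
  linarith

end

end Stmt15Aux

open Stmt15Aux

/-- Lattice-point sum vs. integral over the simplex `G(y)` with `y = log(√d/2)`:
the difference is `O((log d)^m)`. -/
theorem stmt15 (m : ℕ) (hm : 1 ≤ m) (n : Fin m → ℕ) (hn : ∀ i, 2 ≤ n i) :
    ∃ C > (0:ℝ), ∃ D₀ > (0:ℝ), ∀ d : ℝ, D₀ ≤ d →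
      |(∑' e : {e : Fin m → ℕ //
            ∑ i, (e i : ℝ) * Real.log (n i) ≤ Real.log (Real.sqrt d / 2)},
          (Real.log (Real.sqrt d / 2) - ∑ i, ((e : Fin m → ℕ) i : ℝ) * Real.log (n i))) -
        ∫ x in {x : Fin m → ℝ | (∀ i, 0 ≤ x i) ∧
            ∑ i, x i * Real.log (n i) ≤ Real.log (Real.sqrt d / 2)},
          (Real.log (Real.sqrt d / 2) - ∑ i, x i * Real.log (n i)) ∂volume| ≤
      C * (Real.log d) ^ m := by
  set w : Fin m → ℝ := fun i => Real.log (n i) with hwdef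
  have hl2 : (0:ℝ) < Real.log 2 := Real.log_pos one_lt_two
  have hw : ∀ i, Real.log 2 ≤ w i := fun i => by
    apply Real.log_le_log two_pos
    exact_mod_cast hn i
  have hw0 : ∀ i, 0 ≤ w i := fun i => le_trans hl2.le (hw i)
  set L : ℝ := ∑ i, w i with hLdef
  have hL0 : 0 ≤ L := Finset.sum_nonneg fun i _ => hw0 i
  refine ⟨L * (2 / Real.log 2) ^ m + 1, by positivity, Real.exp (2 * L + 4), Real.exp_pos _,
    fun d hd => ?_⟩
  set y : ℝ := Real.log (Real.sqrt d / 2) with hydef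
  have hd1 : (1:ℝ) ≤ d := le_trans (by { rw [← Real.exp_zero]; exact Real.exp_le_exp.2 (by linarith) }) hd
  have hd0 : (0:ℝ) < d := by linarith
  have hlogd : 2 * L + 4 ≤ Real.log d := by
    rw [← Real.log_exp (2 * L + 4)]
    exact Real.log_le_log (Real.exp_pos _) hd
  have hlogd0 : 0 ≤ Real.log d := by linarith
  have hy : y = Real.log d / 2 - Real.log 2 := by
    rw [hydef, Real.log_div (by positivity) two_ne_zero, Real.log_sqrt hd0.le]
  have hlog2le1 : Real.log 2 ≤ 1 := by
    rw [← Real.log_exp 1]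
    exact Real.log_le_log two_pos (by linarith [Real.add_one_le_exp 1])
  have hyL : L ≤ y := by rw [hy]; linarith
  have hy0 : 0 ≤ y := by linarith
  have hyd : y ≤ Real.log d := by rw [hy]; linarith
  -- rewrite the tsum
  have hsum_eq : (∑' e : {e : Fin m → ℕ //
        ∑ i, (e i : ℝ) * Real.log (n i) ≤ Real.log (Real.sqrt d / 2)},
      (Real.log (Real.sqrt d / 2) - ∑ i, ((e : Fin m → ℕ) i : ℝ) * Real.log (n i))) =
      ∑' e : Fin m → ℕ, ff w y (fun i => (e i : ℝ)) := by
    refine Eq.trans (tsum_subtype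
      {e : Fin m → ℕ | ∑ i, (e i : ℝ) * Real.log (n i) ≤ Real.log (Real.sqrt d / 2)}
      (fun e => Real.log (Real.sqrt d / 2) - ∑ i, (e i : ℝ) * Real.log (n i))) ?_
    congr 1
    funext e
    by_cases he : ∑ i, (e i : ℝ) * Real.log (n i) ≤ Real.log (Real.sqrt d / 2)
    · rw [indicator_of_mem (show e ∈ {e : Fin m → ℕ |
          ∑ i, (e i : ℝ) * Real.log (n i) ≤ Real.log (Real.sqrt d / 2)} from he)]
      rw [ff, max_eq_left (by simpa [hwdef, hydef] using sub_nonneg.2 he)]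
    · rw [indicator_of_notMem (show e ∉ {e : Fin m → ℕ |
          ∑ i, (e i : ℝ) * Real.log (n i) ≤ Real.log (Real.sqrt d / 2)} from he)]
      rw [ff, max_eq_right (by push_neg at he; simp only [hwdef, hydef]; linarith)]
  -- rewrite the integral
  have hint_eq : (∫ x in {x : Fin m → ℝ | (∀ i, 0 ≤ x i) ∧
        ∑ i, x i * Real.log (n i) ≤ Real.log (Real.sqrt d / 2)},
      (Real.log (Real.sqrt d / 2) - ∑ i, x i * Real.log (n i)) ∂volume) =
      ∫ x in orth m, ff w y x := by
    have hmeasS : MeasurableSet {x : Fin m → ℝ | (∀ i, 0 ≤ x i) ∧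
        ∑ i, x i * Real.log (n i) ≤ Real.log (Real.sqrt d / 2)} := by
      have : {x : Fin m → ℝ | (∀ i, 0 ≤ x i) ∧
          ∑ i, x i * Real.log (n i) ≤ Real.log (Real.sqrt d / 2)} =
          orth m ∩ {x | ∑ i, x i * Real.log (n i) ≤ Real.log (Real.sqrt d / 2)} := by
        ext x; simp [mem_orth]
      rw [this]
      refine orth_meas.inter ?_
      exact measurableSet_le (by fun_prop) measurable_const
    rw [← integral_indicator hmeasS, ← integral_indicator orth_meas]
    congr 1
    funext x
    by_cases hxo : ∀ i, 0 ≤ x i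
    · by_cases hxs : ∑ i, x i * Real.log (n i) ≤ Real.log (Real.sqrt d / 2)
      · rw [indicator_of_mem (mem_setOf.2 ⟨hxo, hxs⟩), indicator_of_mem (mem_orth.2 hxo)]
        rw [ff, max_eq_left (by simpa [hwdef, hydef] using sub_nonneg.2 hxs)]
      · rw [indicator_of_notMem (fun h => hxs h.2), indicator_of_mem (mem_orth.2 hxo)]
        rw [ff, max_eq_right (by push_neg at hxs; simp only [hwdef, hydef]; linarith)]
    · rw [indicator_of_notMem (fun h => hxo h.1), indicator_of_notMem (fun h => hxo (mem_orth.1 h))]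
  rw [hsum_eq, hint_eq]
  calc |(∑' e : Fin m → ℕ, ff w y (fun i => (e i : ℝ))) - ∫ x in orth m, ff w y x|
      ≤ L * ((y + L) / Real.log 2) ^ m := sum_sub_integral_bound hw hy0
    _ ≤ L * (2 / Real.log 2) ^ m * Real.log d ^ m := by
        rw [mul_assoc]
        refine mul_le_mul_of_nonneg_left ?_ hL0
        rw [← mul_pow]
        refine pow_le_pow_left₀ (by positivity) ?_ m
        rw [div_mul_eq_mul_div, div_le_div_iff₀ hl2 hl2]
        nlinarith
    _ ≤ (L * (2 / Real.log 2) ^ m + 1) * Real.log d ^ m := by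
        have : (0:ℝ) ≤ Real.log d ^ m := by positivity
        nlinarith
end
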